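/- Let (C, ⊗, 1_C) and (D, ⊗, 1_D) be monoidal categories, and let W_C and W_D be classes of morphisms of C and D respectively, each containing all isomorphisms, closed under composition, and stable under tensoring (for every f in the class and every object X, both X ⊗ f and f ⊗ X lie in the class), so that the localized categories C[W_C⁻¹] and D[W_D⁻¹] carry induced monoidal structures for which the localization functors L_C : C → C[W_C⁻¹] and L_D : D → D[W_D⁻¹] are strong monoidal. Let F : C → D be an oplax monoidal functor such that (i) F sends every morphism of W_C to a morphism of W_D, (ii) for all objects X, Y of C the oplax structure morphism F(X ⊗ Y) → F(X) ⊗ F(Y) lies in W_D, and (iii) the oplax unit morphism F(1_C) → 1_D lies in W_D. Then the functor F̄ : C[W_C⁻¹] → D[W_D⁻¹] induced by L_D ∘ F (i.e. satisfying F̄ ∘ L_C ≅ L_D ∘ F) admits the structure of a strong monoidal functor. -/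

import Mathlib

open CategoryTheory MonoidalCategory Category

namespace OplaxLocAux

variable {C : Type*} [Category C] [MonoidalCategory C]
  {D : Type*} [Category D] [MonoidalCategory D]

open Functor.LaxMonoidal Functor.OplaxMonoidal

/-- Transport of a monoidal functor structure along a natural isomorphism. -/
noncomputable def coreMonoidalOfIso {K' K : C ⥤ D} [K.Monoidal] (e : K' ≅ K) :
    K'.CoreMonoidal where
  εIso := Functor.Monoidal.εIso K ≪≫ (e.app (𝟙_ C)).symm
  μIso X Y := tensorIso (e.app X) (e.app Y) ≪≫ Functor.Monoidal.μIso K X Y ≪≫ (e.app (X ⊗ Y)).symm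
  μIso_hom_natural_left {X Y} f X' := by
    dsimp
    simp only [tensorIso_hom, Iso.app_hom, Functor.Monoidal.μIso_hom, Functor.Monoidal.εIso_hom]
    rw [tensorHom_def_assoc (e.hom.app Y) (e.hom.app X'),
      tensorHom_def_assoc (e.hom.app X) (e.hom.app X'), assoc,
      ← comp_whiskerRight_assoc, e.hom.naturality f, comp_whiskerRight_assoc,
      ← reassoc_of% whisker_exchange (K.map f) (e.hom.app X'),
      μ_natural_left_assoc, e.inv.naturality (f ▷ X')]
    simp only [assoc]
  μIso_hom_natural_right {X Y} X' f := by
    dsimp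
    simp only [tensorIso_hom, Iso.app_hom, Functor.Monoidal.μIso_hom, Functor.Monoidal.εIso_hom]
    rw [reassoc_of% tensorHom_def' (e.hom.app X') (e.hom.app Y),
      reassoc_of% tensorHom_def' (e.hom.app X') (e.hom.app X), assoc,
      ← MonoidalCategory.whiskerLeft_comp_assoc, e.hom.naturality f,
      MonoidalCategory.whiskerLeft_comp_assoc,
      reassoc_of% whisker_exchange (e.hom.app X') (K.map f),
      μ_natural_right_assoc, e.inv.naturality (X' ◁ f)]
    simp only [assoc]
  associativity X Y Z := by
    dsimp
    simp only [tensorIso_hom, Iso.app_hom, Functor.Monoidal.μIso_hom, Functor.Monoidal.εIso_hom]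
    simp only [comp_whiskerRight, MonoidalCategory.whiskerLeft_comp, assoc]
    conv_lhs =>
      rw [tensorHom_def_assoc (e.hom.app (X ⊗ Y)) (e.hom.app Z)]
      simp only [assoc]
      rw [← comp_whiskerRight_assoc (e.inv.app (X ⊗ Y)) (e.hom.app (X ⊗ Y)),
        e.inv_hom_id_app, id_whiskerRight, id_comp,
        ← reassoc_of% whisker_exchange (μ K X Y) (e.hom.app Z),
        ← e.inv.naturality (α_ X Y Z).hom,
        Functor.LaxMonoidal.associativity_assoc,
        ← tensorHom_def_assoc, associator_naturality_assoc,
        tensorHom_def_assoc (e.hom.app X) (e.hom.app Y ⊗ₘ e.hom.app Z)]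
    conv_rhs =>
      rw [reassoc_of% tensorHom_def' (e.hom.app X) (e.hom.app (Y ⊗ Z))]
      simp only [assoc]
      rw [← MonoidalCategory.whiskerLeft_comp_assoc (K'.obj X) (e.inv.app (Y ⊗ Z))
          (e.hom.app (Y ⊗ Z)),
        e.inv_hom_id_app, MonoidalCategory.whiskerLeft_id, id_comp,
        reassoc_of% whisker_exchange (e.hom.app X) (μ K Y Z),
        reassoc_of% whisker_exchange (e.hom.app X) (e.hom.app Y ⊗ₘ e.hom.app Z)]
  left_unitality X := by
    dsimp
    simp only [tensorIso_hom, Iso.app_hom, Functor.Monoidal.μIso_hom, Functor.Monoidal.εIso_hom]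
    rw [comp_whiskerRight, assoc, tensorHom_def_assoc (e.hom.app (𝟙_ C)) (e.hom.app X)]
    simp only [assoc]
    rw [← comp_whiskerRight_assoc (e.inv.app (𝟙_ C)) (e.hom.app (𝟙_ C)), e.inv_hom_id_app,
      id_whiskerRight, id_comp, ← reassoc_of% whisker_exchange (ε K) (e.hom.app X),
      ← e.inv.naturality (λ_ X).hom, ← Functor.LaxMonoidal.left_unitality_assoc,
      leftUnitor_naturality_assoc, e.hom_inv_id_app, comp_id]
  right_unitality X := by
    dsimp
    simp only [tensorIso_hom, Iso.app_hom, Functor.Monoidal.μIso_hom, Functor.Monoidal.εIso_hom]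
    rw [MonoidalCategory.whiskerLeft_comp, assoc,
      reassoc_of% tensorHom_def' (e.hom.app X) (e.hom.app (𝟙_ C))]
    simp only [assoc]
    rw [← MonoidalCategory.whiskerLeft_comp_assoc (K'.obj X) (e.inv.app (𝟙_ C))
        (e.hom.app (𝟙_ C)),
      e.inv_hom_id_app, MonoidalCategory.whiskerLeft_id, id_comp,
      reassoc_of% whisker_exchange (e.hom.app X) (ε K),
      ← e.inv.naturality (ρ_ X).hom, ← Functor.LaxMonoidal.right_unitality_assoc,
      rightUnitor_naturality_assoc, e.hom_inv_id_app, comp_id]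

end OplaxLocAux

namespace OplaxLocAux

open Functor.LaxMonoidal Functor.OplaxMonoidal Localization

set_option maxHeartbeats 1000000 in
theorem aux
    {C : Type u₁} [Category.{v₁} C] [MonoidalCategory C]
    {D : Type u₂} [Category.{v₂} D] [MonoidalCategory D]
    {C' : Type u₃} [Category.{v₃} C'] [MonoidalCategory C']
    {D' : Type u₄} [Category.{v₄} D'] [MonoidalCategory D']
    (W_C : MorphismProperty C) (W_D : MorphismProperty D)
    (hCiso : ∀ {X Y : C} (f : X ⟶ Y), IsIso f → W_C f)
    (L_C : C ⥤ C') [L_C.IsLocalization W_C] [L_C.Monoidal]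
    (L_D : D ⥤ D') [L_D.IsLocalization W_D] [L_D.Monoidal]
    (F : C ⥤ D) [F.OplaxMonoidal]
    (hδ : ∀ X Y : C, W_D (Functor.OplaxMonoidal.δ F X Y))
    (hη : W_D (Functor.OplaxMonoidal.η F))
    (Fbar : C' ⥤ D') (e : L_C ⋙ Fbar ≅ F ⋙ L_D) :
    Nonempty Fbar.Monoidal := by
  haveI : W_C.ContainsIdentities := ⟨fun X => hCiso _ inferInstance⟩
  haveI : IsIso (Functor.OplaxMonoidal.η (F ⋙ L_D)) := by
    rw [Functor.OplaxMonoidal.comp_η]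
    haveI := Localization.inverts L_D W_D _ hη
    infer_instance
  haveI : ∀ X Y : C, IsIso (Functor.OplaxMonoidal.δ (F ⋙ L_D) X Y) := fun X Y => by
    rw [Functor.OplaxMonoidal.comp_δ]
    haveI := Localization.inverts L_D W_D _ (hδ X Y)
    infer_instance
  letI : (F ⋙ L_D).Monoidal := Functor.Monoidal.ofOplaxMonoidal _
  letI : (L_C ⋙ Fbar).Monoidal := (coreMonoidalOfIso e).toMonoidal
  -- the two functors on `C' × C'` to be compared
  let G₁ : C' × C' ⥤ D' := (Fbar.prod Fbar) ⋙ tensor D'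
  let G₂ : C' × C' ⥤ D' := tensor C' ⋙ Fbar
  -- the comparison isomorphism after restriction to `C × C`
  let ψ : ((L_C.prod L_C) ⋙ G₁ : C × C ⥤ D') ≅ (L_C.prod L_C) ⋙ G₂ :=
    NatIso.ofComponents
      (fun p => Functor.Monoidal.μIso (L_C ⋙ Fbar) p.1 p.2 ≪≫
        Fbar.mapIso (Functor.Monoidal.μIso L_C p.1 p.2).symm)
      (fun {p q} u => by
        dsimp [G₁, G₂]
        simp only [Functor.Monoidal.μIso_hom, Functor.Monoidal.μIso_inv]
        simp only [← Functor.comp_map L_C Fbar]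
        rw [μ_natural_assoc (L_C ⋙ Fbar) u.1 u.2]
        simp only [Functor.comp_obj, Functor.comp_map, assoc, ← Fbar.map_comp]
        rw [Functor.OplaxMonoidal.δ_natural])
  -- lift to an isomorphism `G₁ ≅ G₂`
  let μbar : G₁ ≅ G₂ :=
    Localization.liftNatIso (L_C.prod L_C) (W_C.prod W_C) ((L_C.prod L_C) ⋙ G₁)
      ((L_C.prod L_C) ⋙ G₂) G₁ G₂ ψ
  have hψ : ∀ x y : C, μbar.hom.app (L_C.obj x, L_C.obj y) =
      μ (L_C ⋙ Fbar) x y ≫ Fbar.map (δ L_C x y) := by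
    intro x y
    have h := Localization.liftNatTrans_app (L_C.prod L_C) (W_C.prod W_C)
      ((L_C.prod L_C) ⋙ G₁) ((L_C.prod L_C) ⋙ G₂) G₁ G₂ ψ.hom (x, y)
    simpa [μbar, ψ] using h
  have hnat : ∀ {P Q : C' × C'} (u : P ⟶ Q),
      (Fbar.map u.1 ⊗ₘ Fbar.map u.2) ≫ μbar.hom.app Q = μbar.hom.app P ≫ Fbar.map (u.1 ⊗ₘ u.2) := by
    intro P Q u
    simpa [G₁, G₂] using μbar.hom.naturality u
  have hconjL : ∀ {A B : C'} (w : A ≅ B) (Y' : C'),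
      μbar.hom.app (A, Y') =
        Fbar.map w.hom ▷ Fbar.obj Y' ≫ μbar.hom.app (B, Y') ≫ Fbar.map (w.inv ▷ Y') := by
    intro A B w Y'
    have h := hnat (P := (A, Y')) (Q := (B, Y')) (w.hom, 𝟙 Y')
    dsimp at h
    rw [Fbar.map_id, tensorHom_id, tensorHom_id] at h
    rw [reassoc_of% h, ← Fbar.map_comp, ← comp_whiskerRight, w.hom_inv_id, id_whiskerRight,
      Fbar.map_id]
    exact (Category.comp_id _).symm
  have hconjR : ∀ (X' : C') {A B : C'} (w : A ≅ B),
      μbar.hom.app (X', A) =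
        Fbar.obj X' ◁ Fbar.map w.hom ≫ μbar.hom.app (X', B) ≫ Fbar.map (X' ◁ w.inv) := by
    intro X' A B w
    have h := hnat (P := (X', A)) (Q := (X', B)) (𝟙 X', w.hom)
    dsimp at h
    rw [Fbar.map_id, id_tensorHom, id_tensorHom] at h
    rw [reassoc_of% h, ← Fbar.map_comp, ← MonoidalCategory.whiskerLeft_comp, w.hom_inv_id,
      MonoidalCategory.whiskerLeft_id, Fbar.map_id]
    exact (Category.comp_id _).symm
  let Θ : Fbar.CoreMonoidal :=
    { εIso := Functor.Monoidal.εIso (L_C ⋙ Fbar) ≪≫ Fbar.mapIso (Functor.Monoidal.εIso L_C).symm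
      μIso := fun X Y => μbar.app (X, Y)
      μIso_hom_natural_left := fun {X Y} f X' => by
        have h := hnat (P := (X, X')) (Q := (Y, X')) (f, 𝟙 X')
        dsimp at h ⊢
        rwa [Fbar.map_id, tensorHom_id, tensorHom_id] at h
      μIso_hom_natural_right := fun {X Y} X' f => by
        have h := hnat (P := (X', X)) (Q := (X', Y)) (𝟙 X', f)
        dsimp at h ⊢
        rwa [Fbar.map_id, id_tensorHom, id_tensorHom] at h
      associativity := fun X Y Z => by
        let H₁ : (C' × C') × C' ⥤ D' := (G₁.prod Fbar) ⋙ tensor D'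
        let H₂ : (C' × C') × C' ⥤ D' := ((tensor C').prod (𝟭 C')) ⋙ tensor C' ⋙ Fbar
        let Φ : H₁ ⟶ H₂ :=
          { app := fun P => μbar.hom.app P.1 ▷ Fbar.obj P.2 ≫ μbar.hom.app (P.1.1 ⊗ P.1.2, P.2)
            naturality := fun P Q u => by
              have h1 := hnat (P := P.1) (Q := Q.1) u.1
              have h2 := hnat (P := (P.1.1 ⊗ P.1.2, P.2)) (Q := (Q.1.1 ⊗ Q.1.2, Q.2))
                (u.1.1 ⊗ₘ u.1.2, u.2)
              dsimp [H₁, H₂, G₁, G₂] at h1 h2 ⊢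
              calc ((Fbar.map u.1.1 ⊗ₘ Fbar.map u.1.2) ⊗ₘ Fbar.map u.2) ≫
                    μbar.hom.app Q.1 ▷ Fbar.obj Q.2 ≫ μbar.hom.app (Q.1.1 ⊗ Q.1.2, Q.2)
                  = (((Fbar.map u.1.1 ⊗ₘ Fbar.map u.1.2) ≫ μbar.hom.app Q.1) ⊗ₘ
                      (Fbar.map u.2 ≫ 𝟙 _)) ≫ μbar.hom.app (Q.1.1 ⊗ Q.1.2, Q.2) := by
                    rw [← tensorHom_comp_tensorHom, tensorHom_id, assoc]
                _ = ((μbar.hom.app P.1 ≫ Fbar.map (u.1.1 ⊗ₘ u.1.2)) ⊗ₘ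
                      (𝟙 _ ≫ Fbar.map u.2)) ≫ μbar.hom.app (Q.1.1 ⊗ Q.1.2, Q.2) := by
                    rw [h1]
                    simp only [comp_id, id_comp]
                _ = μbar.hom.app P.1 ▷ Fbar.obj P.2 ≫
                      ((Fbar.map (u.1.1 ⊗ₘ u.1.2) ⊗ₘ Fbar.map u.2) ≫
                        μbar.hom.app (Q.1.1 ⊗ Q.1.2, Q.2)) := by
                    rw [← tensorHom_comp_tensorHom, tensorHom_id, assoc]
                _ = μbar.hom.app P.1 ▷ Fbar.obj P.2 ≫ μbar.hom.app (P.1.1 ⊗ P.1.2, P.2) ≫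
                      Fbar.map ((u.1.1 ⊗ₘ u.1.2) ⊗ₘ u.2) := by rw [h2]
                _ = (μbar.hom.app P.1 ▷ Fbar.obj P.2 ≫ μbar.hom.app (P.1.1 ⊗ P.1.2, P.2)) ≫
                      Fbar.map ((u.1.1 ⊗ₘ u.1.2) ⊗ₘ u.2) := by rw [assoc] }
        let Ψ : H₁ ⟶ H₂ :=
          { app := fun P => (α_ _ _ _).hom ≫ Fbar.obj P.1.1 ◁ μbar.hom.app (P.1.2, P.2) ≫
              μbar.hom.app (P.1.1, P.1.2 ⊗ P.2) ≫ Fbar.map (α_ P.1.1 P.1.2 P.2).inv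
            naturality := fun P Q u => by
              have h1 := hnat (P := (P.1.2, P.2)) (Q := (Q.1.2, Q.2)) (u.1.2, u.2)
              have h2 := hnat (P := (P.1.1, P.1.2 ⊗ P.2)) (Q := (Q.1.1, Q.1.2 ⊗ Q.2))
                (u.1.1, u.1.2 ⊗ₘ u.2)
              dsimp [H₁, H₂, G₁, G₂] at h1 h2 ⊢
              rw [associator_naturality_assoc]
              calc (α_ (Fbar.obj P.1.1) (Fbar.obj P.1.2) (Fbar.obj P.2)).hom ≫
                    (Fbar.map u.1.1 ⊗ₘ Fbar.map u.1.2 ⊗ₘ Fbar.map u.2) ≫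
                    Fbar.obj Q.1.1 ◁ μbar.hom.app (Q.1.2, Q.2) ≫
                      μbar.hom.app (Q.1.1, Q.1.2 ⊗ Q.2) ≫ Fbar.map (α_ Q.1.1 Q.1.2 Q.2).inv
                  = (α_ (Fbar.obj P.1.1) (Fbar.obj P.1.2) (Fbar.obj P.2)).hom ≫
                      ((Fbar.map u.1.1 ≫ 𝟙 _) ⊗ₘ
                      ((Fbar.map u.1.2 ⊗ₘ Fbar.map u.2) ≫ μbar.hom.app (Q.1.2, Q.2))) ≫
                      μbar.hom.app (Q.1.1, Q.1.2 ⊗ Q.2) ≫ Fbar.map (α_ Q.1.1 Q.1.2 Q.2).inv := by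
                    rw [← tensorHom_comp_tensorHom, id_tensorHom]
                    simp only [assoc]
                _ = (α_ (Fbar.obj P.1.1) (Fbar.obj P.1.2) (Fbar.obj P.2)).hom ≫
                      ((𝟙 _ ≫ Fbar.map u.1.1) ⊗ₘ
                      (μbar.hom.app (P.1.2, P.2) ≫ Fbar.map (u.1.2 ⊗ₘ u.2))) ≫
                      μbar.hom.app (Q.1.1, Q.1.2 ⊗ Q.2) ≫ Fbar.map (α_ Q.1.1 Q.1.2 Q.2).inv := by
                    rw [h1]
                    simp only [comp_id, id_comp]
                _ = (α_ (Fbar.obj P.1.1) (Fbar.obj P.1.2) (Fbar.obj P.2)).hom ≫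
                      Fbar.obj P.1.1 ◁ μbar.hom.app (P.1.2, P.2) ≫
                      ((Fbar.map u.1.1 ⊗ₘ Fbar.map (u.1.2 ⊗ₘ u.2)) ≫
                        μbar.hom.app (Q.1.1, Q.1.2 ⊗ Q.2)) ≫
                      Fbar.map (α_ Q.1.1 Q.1.2 Q.2).inv := by
                    simp only [← tensorHom_comp_tensorHom, id_tensorHom, assoc]
                _ = (α_ (Fbar.obj P.1.1) (Fbar.obj P.1.2) (Fbar.obj P.2)).hom ≫
                      Fbar.obj P.1.1 ◁ μbar.hom.app (P.1.2, P.2) ≫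
                      μbar.hom.app (P.1.1, P.1.2 ⊗ P.2) ≫
                      (Fbar.map (u.1.1 ⊗ₘ u.1.2 ⊗ₘ u.2) ≫ Fbar.map (α_ Q.1.1 Q.1.2 Q.2).inv) := by
                    rw [h2]
                    simp only [assoc]
                _ = ((α_ (Fbar.obj P.1.1) (Fbar.obj P.1.2) (Fbar.obj P.2)).hom ≫
                      Fbar.obj P.1.1 ◁ μbar.hom.app (P.1.2, P.2) ≫
                      μbar.hom.app (P.1.1, P.1.2 ⊗ P.2) ≫ Fbar.map (α_ P.1.1 P.1.2 P.2).inv) ≫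
                      Fbar.map ((u.1.1 ⊗ₘ u.1.2) ⊗ₘ u.2) := by
                    rw [← Fbar.map_comp, associator_inv_naturality, Fbar.map_comp]
                    simp only [assoc] }
        have heq : Φ = Ψ := by
          refine Localization.natTrans_ext ((L_C.prod L_C).prod L_C)
            ((W_C.prod W_C).prod W_C) (fun P => ?_)
          obtain ⟨⟨x, y⟩, z⟩ := P
          have hassocK : μ (L_C ⋙ Fbar) x y ▷ Fbar.obj (L_C.obj z) ≫ μ (L_C ⋙ Fbar) (x ⊗ y) z =
              (α_ (Fbar.obj (L_C.obj x)) (Fbar.obj (L_C.obj y)) (Fbar.obj (L_C.obj z))).hom ≫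
                Fbar.obj (L_C.obj x) ◁ μ (L_C ⋙ Fbar) y z ≫ μ (L_C ⋙ Fbar) x (y ⊗ z) ≫
                (L_C ⋙ Fbar).map (α_ x y z).inv := by
            rw [← cancel_mono ((L_C ⋙ Fbar).map (α_ x y z).hom)]
            simp only [assoc]
            rw [← Functor.map_comp, Iso.inv_hom_id, CategoryTheory.Functor.map_id, comp_id]
            exact Functor.LaxMonoidal.associativity (L_C ⋙ Fbar) x y z
          dsimp [Φ, Ψ, H₁, H₂]
          rw [hconjL (Functor.Monoidal.μIso L_C x y) (L_C.obj z),
            hconjR (L_C.obj x) (Functor.Monoidal.μIso L_C y z),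
            hψ x y, hψ y z, hψ (x ⊗ y) z, hψ x (y ⊗ z)]
          simp only [Functor.Monoidal.μIso_hom, Functor.Monoidal.μIso_inv, comp_whiskerRight,
            MonoidalCategory.whiskerLeft_comp, assoc]
          rw [← comp_whiskerRight_assoc (Fbar.map (Functor.OplaxMonoidal.δ L_C x y))
              (Fbar.map (Functor.LaxMonoidal.μ L_C x y)),
            ← Fbar.map_comp (Functor.OplaxMonoidal.δ L_C x y) (Functor.LaxMonoidal.μ L_C x y),
            Functor.Monoidal.δ_μ, Fbar.map_id, id_whiskerRight, id_comp,
            reassoc_of% hassocK,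
            ← MonoidalCategory.whiskerLeft_comp_assoc (Fbar.obj (L_C.obj x))
              (Fbar.map (Functor.OplaxMonoidal.δ L_C y z))
              (Fbar.map (Functor.LaxMonoidal.μ L_C y z)),
            ← Fbar.map_comp (Functor.OplaxMonoidal.δ L_C y z) (Functor.LaxMonoidal.μ L_C y z),
            Functor.Monoidal.δ_μ, Fbar.map_id,
            MonoidalCategory.whiskerLeft_id, id_comp]
          simp only [Functor.comp_map, assoc, ← Fbar.map_comp]
          rw [Functor.OplaxMonoidal.associativity_inv]
        have hXYZ := congr_arg (fun (τ : H₁ ⟶ H₂) => τ.app ((X, Y), Z)) heq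
        dsimp [Φ, Ψ, H₁, H₂] at hXYZ
        simp only [Iso.app_hom]
        rw [reassoc_of% hXYZ]
        simp only [assoc, ← Fbar.map_comp, Iso.inv_hom_id, Fbar.map_id]
        exact congrArg (fun t => (α_ (Fbar.obj X) (Fbar.obj Y) (Fbar.obj Z)).hom ≫
          Fbar.obj X ◁ μbar.hom.app (Y, Z) ≫ t) (Category.comp_id _)
      left_unitality := fun X => by
        let S : C' ⥤ D' := Fbar ⋙ tensorLeft (𝟙_ D')
        let Φu : S ⟶ Fbar :=
          { app := fun X' => (λ_ (Fbar.obj X')).hom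
            naturality := fun X' Y' f => by
              dsimp [S]
              rw [leftUnitor_naturality] }
        let Ψu : S ⟶ Fbar :=
          { app := fun X' => (Functor.LaxMonoidal.ε (L_C ⋙ Fbar) ≫
              Fbar.map (Functor.OplaxMonoidal.η L_C)) ▷ Fbar.obj X' ≫
              μbar.hom.app (𝟙_ C', X') ≫ Fbar.map (λ_ X').hom
            naturality := fun X' Y' f => by
              have h := hnat (P := (𝟙_ C', X')) (Q := (𝟙_ C', Y')) (𝟙 _, f)
              dsimp [S] at h ⊢
              rw [Fbar.map_id, id_tensorHom, id_tensorHom] at h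
              rw [reassoc_of% whisker_exchange (Functor.LaxMonoidal.ε (L_C ⋙ Fbar) ≫
                  Fbar.map (Functor.OplaxMonoidal.η L_C)) (Fbar.map f),
                reassoc_of% h, ← Fbar.map_comp, leftUnitor_naturality, Fbar.map_comp]
              simp only [assoc] }
        have hu : Φu = Ψu := by
          refine Localization.natTrans_ext L_C W_C (fun x => ?_)
          have hunitK : Functor.LaxMonoidal.ε (L_C ⋙ Fbar) ▷ Fbar.obj (L_C.obj x) ≫
              μ (L_C ⋙ Fbar) (𝟙_ C) x =
              (λ_ (Fbar.obj (L_C.obj x))).hom ≫ (L_C ⋙ Fbar).map (λ_ x).inv := by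
            rw [← cancel_mono ((L_C ⋙ Fbar).map (λ_ x).hom)]
            simp only [assoc]
            rw [← Functor.map_comp, Iso.inv_hom_id, CategoryTheory.Functor.map_id]
            exact ((Functor.LaxMonoidal.left_unitality (L_C ⋙ Fbar) x).symm.trans
              (Category.comp_id _).symm)
          dsimp [Φu, Ψu, S]
          rw [hconjL (Functor.Monoidal.εIso L_C) (L_C.obj x), hψ (𝟙_ C) x]
          simp only [Functor.Monoidal.εIso_hom, Functor.Monoidal.εIso_inv, comp_whiskerRight,
            assoc]
          rw [← comp_whiskerRight_assoc (Fbar.map (Functor.OplaxMonoidal.η L_C))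
              (Fbar.map (Functor.LaxMonoidal.ε L_C)),
            ← Fbar.map_comp (Functor.OplaxMonoidal.η L_C) (Functor.LaxMonoidal.ε L_C),
            Functor.Monoidal.η_ε, Fbar.map_id, id_whiskerRight, id_comp,
            reassoc_of% hunitK]
          simp only [Functor.comp_map, assoc, ← Fbar.map_comp]
          rw [Functor.OplaxMonoidal.left_unitality_hom, ← L_C.map_comp, Iso.inv_hom_id,
            L_C.map_id, Fbar.map_id, comp_id]
        have hX := congr_arg (fun (τ : S ⟶ Fbar) => τ.app X) hu
        dsimp [Φu, Ψu, S] at hX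
        simpa using hX
      right_unitality := fun X => by
        let S : C' ⥤ D' := Fbar ⋙ tensorRight (𝟙_ D')
        let Φu : S ⟶ Fbar :=
          { app := fun X' => (ρ_ (Fbar.obj X')).hom
            naturality := fun X' Y' f => by
              dsimp [S]
              rw [rightUnitor_naturality] }
        let Ψu : S ⟶ Fbar :=
          { app := fun X' => Fbar.obj X' ◁ (Functor.LaxMonoidal.ε (L_C ⋙ Fbar) ≫
              Fbar.map (Functor.OplaxMonoidal.η L_C)) ≫
              μbar.hom.app (X', 𝟙_ C') ≫ Fbar.map (ρ_ X').hom
            naturality := fun X' Y' f => by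
              have h := hnat (P := (X', 𝟙_ C')) (Q := (Y', 𝟙_ C')) (f, 𝟙 _)
              dsimp [S] at h ⊢
              rw [Fbar.map_id, tensorHom_id, tensorHom_id] at h
              rw [← reassoc_of% whisker_exchange (Fbar.map f)
                  (Functor.LaxMonoidal.ε (L_C ⋙ Fbar) ≫
                    Fbar.map (Functor.OplaxMonoidal.η L_C)),
                reassoc_of% h, ← Fbar.map_comp, rightUnitor_naturality, Fbar.map_comp]
              simp only [assoc] }
        have hu : Φu = Ψu := by
          refine Localization.natTrans_ext L_C W_C (fun x => ?_)
          have hunitK : Fbar.obj (L_C.obj x) ◁ Functor.LaxMonoidal.ε (L_C ⋙ Fbar) ≫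
              μ (L_C ⋙ Fbar) x (𝟙_ C) =
              (ρ_ (Fbar.obj (L_C.obj x))).hom ≫ (L_C ⋙ Fbar).map (ρ_ x).inv := by
            rw [← cancel_mono ((L_C ⋙ Fbar).map (ρ_ x).hom)]
            simp only [assoc]
            rw [← Functor.map_comp, Iso.inv_hom_id, CategoryTheory.Functor.map_id]
            exact ((Functor.LaxMonoidal.right_unitality (L_C ⋙ Fbar) x).symm.trans
              (Category.comp_id _).symm)
          dsimp [Φu, Ψu, S]
          rw [hconjR (L_C.obj x) (Functor.Monoidal.εIso L_C), hψ x (𝟙_ C)]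
          simp only [Functor.Monoidal.εIso_hom, Functor.Monoidal.εIso_inv,
            MonoidalCategory.whiskerLeft_comp, assoc]
          rw [← MonoidalCategory.whiskerLeft_comp_assoc (Fbar.obj (L_C.obj x))
              (Fbar.map (Functor.OplaxMonoidal.η L_C))
              (Fbar.map (Functor.LaxMonoidal.ε L_C)),
            ← Fbar.map_comp (Functor.OplaxMonoidal.η L_C) (Functor.LaxMonoidal.ε L_C),
            Functor.Monoidal.η_ε, Fbar.map_id,
            MonoidalCategory.whiskerLeft_id, id_comp, reassoc_of% hunitK]
          simp only [Functor.comp_map, assoc, ← Fbar.map_comp]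
          rw [Functor.OplaxMonoidal.right_unitality_hom, ← L_C.map_comp, Iso.inv_hom_id,
            L_C.map_id, Fbar.map_id, comp_id]
        have hX := congr_arg (fun (τ : S ⟶ Fbar) => τ.app X) hu
        dsimp [Φu, Ψu, S] at hX
        simpa using hX }
  exact ⟨Θ.toMonoidal⟩

end OplaxLocAux


open CategoryTheory MonoidalCategory

/-- A weak-monoidal-Quillen-type oplax monoidal functor between monoidal
categories, whose oplax structure maps lie in the class of weak equivalences, induces a
strong monoidal structure on the functor between the (monoidal) localizations. -/
theorem oplax_functor_induces_monoidal_on_localizations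
    {C : Type u₁} [Category.{v₁} C] [MonoidalCategory C]
    {D : Type u₂} [Category.{v₂} D] [MonoidalCategory D]
    {C' : Type u₃} [Category.{v₃} C'] [MonoidalCategory C']
    {D' : Type u₄} [Category.{v₄} D'] [MonoidalCategory D']
    (W_C : MorphismProperty C) (W_D : MorphismProperty D)
    -- `W_C` contains all isomorphisms, is closed under composition,
    -- and is stable under tensoring on either side:
    (_ : ∀ {X Y : C} (f : X ⟶ Y), IsIso f → W_C f)
    (_ : ∀ {X Y Z : C} (f : X ⟶ Y) (g : Y ⟶ Z), W_C f → W_C g → W_C (f ≫ g))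
    (_ : ∀ (Z : C) {X Y : C} (f : X ⟶ Y), W_C f → W_C (Z ◁ f))
    (_ : ∀ {X Y : C} (f : X ⟶ Y) (Z : C), W_C f → W_C (f ▷ Z))
    -- likewise for `W_D`:
    (_ : ∀ {X Y : D} (f : X ⟶ Y), IsIso f → W_D f)
    (_ : ∀ {X Y Z : D} (f : X ⟶ Y) (g : Y ⟶ Z), W_D f → W_D g → W_D (f ≫ g))
    (_ : ∀ (Z : D) {X Y : D} (f : X ⟶ Y), W_D f → W_D (Z ◁ f))
    (_ : ∀ {X Y : D} (f : X ⟶ Y) (Z : D), W_D f → W_D (f ▷ Z))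
    -- the localization functors, which are strong monoidal:
    (L_C : C ⥤ C') [L_C.IsLocalization W_C] [L_C.Monoidal]
    (L_D : D ⥤ D') [L_D.IsLocalization W_D] [L_D.Monoidal]
    -- the oplax monoidal functor `F`:
    (F : C ⥤ D) [F.OplaxMonoidal]
    -- (i) `F` sends `W_C` into `W_D`:
    (_ : ∀ {X Y : C} (f : X ⟶ Y), W_C f → W_D (F.map f))
    -- (ii) the oplax structure morphisms `F(X ⊗ Y) ⟶ F X ⊗ F Y` lie in `W_D`:
    (_ : ∀ X Y : C, W_D (Functor.OplaxMonoidal.δ F X Y))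
    -- (iii) the oplax unit morphism `F(𝟙_ C) ⟶ 𝟙_ D` lies in `W_D`:
    (_ : W_D (Functor.OplaxMonoidal.η F))
    -- the induced functor on localizations:
    (Fbar : C' ⥤ D') (_ : L_C ⋙ Fbar ≅ F ⋙ L_D) :
    Nonempty Fbar.Monoidal := by
  apply OplaxLocAux.aux W_C W_D (L_C := L_C) (L_D := L_D) (F := F) (Fbar := Fbar) <;>
    assumption
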